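/- Let a > 0, let k be a natural number, let t = [−5a, 5a] × [−5a, 5a] and t_r = [5a, 15a] × [−5a, 5a] in ℝ², and let S ⊆ ℝ² be a finite set with 2·|S ∩ t| ≤ k and 2·|S ∩ t_r| ≤ k. Suppose S contains at least one point in each of the six closed balls of radius a centered at (0,0), (2a,0), (4a,0), (6a,0), (8a,0), and (10a,0). Then every s ∈ S ∩ closedBall((0,0), a) and every s' ∈ S ∩ closedBall((10a,0), a) are joined in the k-nearest-neighbor graph NN(S,k) by a path with at most 5 edges. -/

import Mathlib

open Metric

/-- The point `(x, y)` of the Euclidean plane. -/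
def pt (x y : ℝ) : EuclideanSpace ℝ (Fin 2) := !₂[x, y]

/-- The rectangle `[x₀, x₁] × [y₀, y₁]` of the Euclidean plane. -/
def tile (x₀ x₁ y₀ y₁ : ℝ) : Set (EuclideanSpace ℝ (Fin 2)) :=
  {x | x 0 ∈ Set.Icc x₀ x₁ ∧ x 1 ∈ Set.Icc y₀ y₁}

/-- `y` is a `k`-nearest neighbor of `x` in `S`: the number of points `z ∈ S \ {x}` with
`dist x z < dist x y` is strictly less than `k`. -/
def IsKNearest (S : Set (EuclideanSpace ℝ (Fin 2))) (k : ℕ)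
    (x y : EuclideanSpace ℝ (Fin 2)) : Prop :=
  {z ∈ S \ {x} | dist x z < dist x y}.ncard < k

/-- The `k`-nearest-neighbor graph on a set `S` of points of the Euclidean plane: distinct
points `x, y ∈ S` are adjacent iff `y` is a `k`-nearest neighbor of `x` or `x` is a
`k`-nearest neighbor of `y`. -/
def NNGraph (S : Set (EuclideanSpace ℝ (Fin 2))) (k : ℕ) : SimpleGraph S where
  Adj x y := x ≠ y ∧
    (IsKNearest S k (x : EuclideanSpace ℝ (Fin 2)) (y : EuclideanSpace ℝ (Fin 2)) ∨
     IsKNearest S k (y : EuclideanSpace ℝ (Fin 2)) (x : EuclideanSpace ℝ (Fin 2)))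
  symm := by
    constructor
    intro x y ⟨hne, h⟩
    exact ⟨hne.symm, h.symm⟩
  loopless := by
    constructor
    intro x ⟨hne, _⟩
    exact hne rfl

private lemma coord_le_dist (x y : EuclideanSpace ℝ (Fin 2)) (i : Fin 2) :
    |x i - y i| ≤ dist x y := by
  rw [EuclideanSpace.dist_eq, ← Real.sqrt_sq_eq_abs]
  apply Real.sqrt_le_sqrt
  have h : (x i - y i) ^ 2 = dist (x i) (y i) ^ 2 := by rw [Real.dist_eq, sq_abs]
  rw [h]
  exact Finset.single_le_sum (f := fun j => dist (x j) (y j) ^ 2) (fun j _ => sq_nonneg _) (Finset.mem_univ i)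

private lemma dist_pt (x y : ℝ) : dist (pt x 0) (pt y 0) = |x - y| := by
  rw [EuclideanSpace.dist_eq, Fin.sum_univ_two]
  simp [pt, Real.dist_eq, Real.sqrt_sq_eq_abs]

private lemma key_adj (a : ℝ) (ha : 0 < a) (k : ℕ) (S : Set (EuclideanSpace ℝ (Fin 2)))
    (hS : S.Finite)
    (hcard : 2 * (S ∩ tile (-(5*a)) (5*a) (-(5*a)) (5*a)).ncard ≤ k)
    (hcard' : 2 * (S ∩ tile (5*a) (15*a) (-(5*a)) (5*a)).ncard ≤ k)
    (c : ℝ) (hc1 : 2*a ≤ c) (hc2 : c ≤ 8*a)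
    (u v : EuclideanSpace ℝ (Fin 2)) (hu : u ∈ S)
    (hu' : u ∈ closedBall (pt c 0) a) (hd : dist u v ≤ 4*a) :
    IsKNearest S k u v := by
  rw [mem_closedBall] at hu'
  have hu0 : |u 0 - c| ≤ a := by
    have h := coord_le_dist u (pt c 0) 0
    simpa [pt] using h.trans hu'
  have hu1 : |u 1| ≤ a := by
    have h := coord_le_dist u (pt c 0) 1
    simpa [pt] using h.trans hu'
  obtain ⟨hu0l, hu0r⟩ := abs_le.mp hu0
  obtain ⟨hu1l, hu1r⟩ := abs_le.mp hu1
  set A := S ∩ tile (-(5*a)) (5*a) (-(5*a)) (5*a) with hA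
  set B := S ∩ tile (5*a) (15*a) (-(5*a)) (5*a) with hB
  set T := {z ∈ S \ {u} | dist u z < dist u v} with hT
  have hzmem : ∀ z ∈ insert u T, z ∈ A ∪ B := by
    intro z hz
    have hzd : z ∈ S ∧ |z 0 - u 0| < 4*a ∨ z = u := by
      rcases hz with rfl | hz
      · exact Or.inr rfl
      · refine Or.inl ⟨hz.1.1, ?_⟩
        have := coord_le_dist u z 0
        have h2 : dist u z < 4*a := lt_of_lt_of_le hz.2 hd
        rw [abs_sub_comm]
        linarith
    have hz1 : |z 1 - u 1| ≤ 4*a ∧ z ∈ S := by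
      rcases hzd with ⟨hzS, _⟩ | rfl
      · rcases hz with rfl | hz
        · exact ⟨by simpa using (by positivity : (0:ℝ) ≤ 4*a), hzS⟩
        · refine ⟨?_, hzS⟩
          have := coord_le_dist u z 1
          have h2 : dist u z < 4*a := lt_of_lt_of_le hz.2 hd
          rw [abs_sub_comm]; linarith
      · exact ⟨by simpa using (by positivity : (0:ℝ) ≤ 4*a), hu⟩
    have hz0 : -(5*a) ≤ z 0 ∧ z 0 ≤ 15*a := by
      rcases hzd with ⟨_, h⟩ | rfl
      · obtain ⟨h1, h2⟩ := abs_le.mp h.le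
        constructor <;> linarith
      · constructor <;> linarith
    obtain ⟨hz1l, hz1r⟩ := abs_le.mp hz1.1
    have hz1' : -(5*a) ≤ z 1 ∧ z 1 ≤ 5*a := ⟨by linarith, by linarith⟩
    by_cases hle : z 0 ≤ 5*a
    · exact Or.inl ⟨hz1.2, ⟨hz0.1, hle⟩, hz1'⟩
    · exact Or.inr ⟨hz1.2, ⟨le_of_not_ge hle, hz0.2⟩, hz1'⟩
  have hTfin : T.Finite := hS.subset (fun z hz => hz.1.1)
  have huT : u ∉ T := fun h => h.1.2 rfl
  have hABfin : (A ∪ B).Finite := (hS.inter_of_left _).union (hS.inter_of_left _)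
  have h1 : (insert u T).ncard ≤ (A ∪ B).ncard :=
    Set.ncard_le_ncard hzmem hABfin
  rw [Set.ncard_insert_of_notMem huT hTfin] at h1
  have h2 : (A ∪ B).ncard ≤ A.ncard + B.ncard := Set.ncard_union_le A B
  show T.ncard < k
  omega

private lemma walk_le_one {V : Type*} {G : SimpleGraph V} {u v : V} (h : u ≠ v → G.Adj u v) :
    ∃ w : G.Walk u v, w.length ≤ 1 := by
  rcases eq_or_ne u v with rfl | huv
  · exact ⟨.nil, by simp⟩
  · exact ⟨.cons (h huv) .nil, by simp⟩

private lemma dist_hop {a : ℝ} (ha : 0 ≤ a) {c c' : ℝ} (h : |c - c'| ≤ 2*a)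
    {u v : EuclideanSpace ℝ (Fin 2)}
    (hu : u ∈ closedBall (pt c 0) a) (hv : v ∈ closedBall (pt c' 0) a) :
    dist u v ≤ 4*a := by
  rw [mem_closedBall] at hu hv
  have h4 := dist_triangle4 u (pt c 0) (pt c' 0) v
  rw [dist_pt] at h4
  have : dist (pt c' 0) v = dist v (pt c' 0) := dist_comm _ _
  linarith

theorem stmt_11' (a : ℝ) (ha : 0 < a) (k : ℕ) (S : Set (EuclideanSpace ℝ (Fin 2)))
    (hS : S.Finite)
    (hcard : 2 * (S ∩ tile (-(5*a)) (5*a) (-(5*a)) (5*a)).ncard ≤ k)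
    (hcard' : 2 * (S ∩ tile (5*a) (15*a) (-(5*a)) (5*a)).ncard ≤ k)
    (h2 : (S ∩ closedBall (pt (2*a) 0) a).Nonempty)
    (h4 : (S ∩ closedBall (pt (4*a) 0) a).Nonempty)
    (h6 : (S ∩ closedBall (pt (6*a) 0) a).Nonempty)
    (h8 : (S ∩ closedBall (pt (8*a) 0) a).Nonempty)
    (G : SimpleGraph S)
    (hG : ∀ x y : S, (x : EuclideanSpace ℝ (Fin 2)) ≠ y →
      (IsKNearest S k x y ∨ IsKNearest S k y x) → G.Adj x y) :
    ∀ s, ∀ hs : s ∈ S, s ∈ closedBall (pt 0 0) a →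
    ∀ s', ∀ hs' : s' ∈ S, s' ∈ closedBall (pt (10*a) 0) a →
      ∃ w : G.Walk ⟨s, hs⟩ ⟨s', hs'⟩, w.length ≤ 5 := by
  intro s hs hsb s' hs' hsb'
  obtain ⟨p2, hp2S, hp2⟩ := h2
  obtain ⟨p4, hp4S, hp4⟩ := h4
  obtain ⟨p6, hp6S, hp6⟩ := h6
  obtain ⟨p8, hp8S, hp8⟩ := h8
  have N1 : IsKNearest S k p2 s :=
    key_adj a ha k S hS hcard hcard' (2*a) le_rfl (by linarith) p2 s hp2S hp2
      (dist_hop ha.le (abs_le.mpr ⟨by linarith, by linarith⟩) hp2 hsb)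
  have N2 : IsKNearest S k p2 p4 :=
    key_adj a ha k S hS hcard hcard' (2*a) le_rfl (by linarith) p2 p4 hp2S hp2
      (dist_hop ha.le (abs_le.mpr ⟨by linarith, by linarith⟩) hp2 hp4)
  have N3 : IsKNearest S k p4 p6 :=
    key_adj a ha k S hS hcard hcard' (4*a) (by linarith) (by linarith) p4 p6 hp4S hp4
      (dist_hop ha.le (abs_le.mpr ⟨by linarith, by linarith⟩) hp4 hp6)
  have N4 : IsKNearest S k p6 p8 :=
    key_adj a ha k S hS hcard hcard' (6*a) (by linarith) (by linarith) p6 p8 hp6S hp6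
      (dist_hop ha.le (abs_le.mpr ⟨by linarith, by linarith⟩) hp6 hp8)
  have N5 : IsKNearest S k p8 s' :=
    key_adj a ha k S hS hcard hcard' (8*a) (by linarith) le_rfl p8 s' hp8S hp8
      (dist_hop ha.le (abs_le.mpr ⟨by linarith, by linarith⟩) hp8 hsb')
  obtain ⟨w1, hw1⟩ := walk_le_one (G := G) (u := ⟨s, hs⟩) (v := ⟨p2, hp2S⟩)
    (fun hne => hG _ _ (fun h => hne (Subtype.ext h)) (Or.inr N1))
  obtain ⟨w2, hw2⟩ := walk_le_one (G := G) (u := ⟨p2, hp2S⟩) (v := ⟨p4, hp4S⟩)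
    (fun hne => hG _ _ (fun h => hne (Subtype.ext h)) (Or.inl N2))
  obtain ⟨w3, hw3⟩ := walk_le_one (G := G) (u := ⟨p4, hp4S⟩) (v := ⟨p6, hp6S⟩)
    (fun hne => hG _ _ (fun h => hne (Subtype.ext h)) (Or.inl N3))
  obtain ⟨w4, hw4⟩ := walk_le_one (G := G) (u := ⟨p6, hp6S⟩) (v := ⟨p8, hp8S⟩)
    (fun hne => hG _ _ (fun h => hne (Subtype.ext h)) (Or.inl N4))
  obtain ⟨w5, hw5⟩ := walk_le_one (G := G) (u := ⟨p8, hp8S⟩) (v := ⟨s', hs'⟩)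
    (fun hne => hG _ _ (fun h => hne (Subtype.ext h)) (Or.inl N5))
  refine ⟨w1.append (w2.append (w3.append (w4.append w5))), ?_⟩
  simp only [SimpleGraph.Walk.length_append]
  omega

/-- Let `a > 0`, `k : ℕ`, `t = [-5a,5a] × [-5a,5a]`, `t_r = [5a,15a] × [-5a,5a]`, and let
`S` be a finite set with `2|S ∩ t| ≤ k` and `2|S ∩ t_r| ≤ k` which meets each of the six
closed balls of radius `a` centered at `(0,0)`, `(2a,0)`, `(4a,0)`, `(6a,0)`, `(8a,0)` and
`(10a,0)`. Then every `s ∈ S ∩ closedBall((0,0),a)` and `s' ∈ S ∩ closedBall((10a,0),a)`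
are joined in the `k`-nearest-neighbor graph `NNGraph S k` by a path (walk) with at most
5 edges. -/
theorem stmt_11 (a : ℝ) (ha : 0 < a) (k : ℕ) (S : Set (EuclideanSpace ℝ (Fin 2)))
    (hS : S.Finite)
    (hcard : 2 * (S ∩ tile (-(5*a)) (5*a) (-(5*a)) (5*a)).ncard ≤ k)
    (hcard' : 2 * (S ∩ tile (5*a) (15*a) (-(5*a)) (5*a)).ncard ≤ k)
    (h0 : (S ∩ closedBall (pt 0 0) a).Nonempty)
    (h2 : (S ∩ closedBall (pt (2*a) 0) a).Nonempty)
    (h4 : (S ∩ closedBall (pt (4*a) 0) a).Nonempty)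
    (h6 : (S ∩ closedBall (pt (6*a) 0) a).Nonempty)
    (h8 : (S ∩ closedBall (pt (8*a) 0) a).Nonempty)
    (h10 : (S ∩ closedBall (pt (10*a) 0) a).Nonempty) :
    ∀ s, ∀ hs : s ∈ S, s ∈ closedBall (pt 0 0) a →
    ∀ s', ∀ hs' : s' ∈ S, s' ∈ closedBall (pt (10*a) 0) a →
      ∃ w : (NNGraph S k).Walk ⟨s, hs⟩ ⟨s', hs'⟩, w.length ≤ 5 := by
  exact stmt_11' a ha k S hS hcard hcard' h2 h4 h6 h8 (NNGraph S k)
    (fun x y hne h => ⟨fun he => hne (congrArg Subtype.val he), h⟩)
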